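/- Let A± = ±iS + V with S, V symmetric, D(S)=D(V), V ≥ ε > 0, A± sectorial, and let A₊,F be the Friedrichs extension of A₊ (which satisfies 0 ∈ ρ(A₊,F) and is a proper extension of (A₊, A₋)). Then D(A₋*) = D(closure(A₊)) ∔ A₊,F⁻¹ ker(A₊*) ∔ ker(A₋*), a direct sum decomposition. -/

import Mathlib

open scoped ComplexInnerProductSpace

section Helpers
set_option linter.unusedSectionVars false

variable {H : Type*} [NormedAddCommGroup H] [InnerProductSpace ℂ H] [CompleteSpace H]

/-- The adjoint of a densely defined operator is closed. -/
lemma st9_adjoint_isClosed (T : H →ₗ.[ℂ] H) (hT : Dense (T.domain : Set H)) :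
    T.adjoint.IsClosed := by
  have hset : (T.adjoint.graph : Set (H × H)) =
      ⋂ x : T.domain, {p : H × H | ⟪p.2, (x : H)⟫ = ⟪p.1, T x⟫} := by
    ext p
    simp only [Set.mem_iInter, Set.mem_setOf_eq, SetLike.mem_coe]
    constructor
    · intro hp x
      rcases T.adjoint.mem_graph_iff.mp hp with ⟨y, hy1, hy2⟩
      rw [← hy1, ← hy2]
      exact LinearPMap.adjoint_isFormalAdjoint hT y x
    · intro hp
      have hy : p.1 ∈ T.adjoint.domain :=
        LinearPMap.mem_adjoint_domain_of_exists _ ⟨p.2, fun x => hp x⟩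
      have hval : T.adjoint ⟨p.1, hy⟩ = p.2 :=
        LinearPMap.adjoint_apply_eq hT _ fun x => hp x
      exact T.adjoint.mem_graph_iff.mpr ⟨⟨p.1, hy⟩, rfl, hval⟩
  show IsClosed (T.adjoint.graph : Set (H × H))
  rw [hset]
  exact isClosed_iInter fun x =>
    isClosed_eq (Continuous.inner continuous_snd continuous_const)
      (Continuous.inner continuous_fst continuous_const)

/-- Lower bound transfers to the closure. -/
lemma st9_closure_bound {T : H →ₗ.[ℂ] H} (hc : T.IsClosable) {ε : ℝ}
    (hb : ∀ ψ : T.domain, ε * ‖(ψ : H)‖ ≤ ‖T ψ‖) :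
    ∀ x : T.closure.domain, ε * ‖(x : H)‖ ≤ ‖T.closure x‖ := by
  intro x
  have hg : ((x : H), T.closure x) ∈ T.graph.topologicalClosure := by
    rw [hc.graph_closure_eq_closure_graph]
    exact T.closure.mem_graph x
  rw [← SetLike.mem_coe, Submodule.topologicalClosure_coe] at hg
  have hC : IsClosed {p : H × H | ε * ‖p.1‖ ≤ ‖p.2‖} :=
    isClosed_le (by fun_prop) (by fun_prop)
  have hsub : (T.graph : Set (H × H)) ⊆ {p : H × H | ε * ‖p.1‖ ≤ ‖p.2‖} := by
    intro p hp
    rcases T.mem_graph_iff.mp hp with ⟨ψ, h1, h2⟩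
    simp only [Set.mem_setOf_eq, ← h1, ← h2]
    exact hb ψ
  exact closure_minimal hsub hC hg

/-- Every limit of ranges is attained by the closure (using the lower bound). -/
lemma st9_closure_surj {T : H →ₗ.[ℂ] H} (hc : T.IsClosable) {ε : ℝ} (hε : 0 < ε)
    (hb : ∀ ψ : T.domain, ε * ‖(ψ : H)‖ ≤ ‖T ψ‖)
    {y : H} (hy : y ∈ closure {z : H | ∃ ψ : T.domain, T ψ = z}) :
    ∃ x : T.closure.domain, T.closure x = y := by
  rcases mem_closure_iff_seq_limit.mp hy with ⟨z, hzmem, hzlim⟩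
  choose ψ hψ using hzmem
  have hcz : CauchySeq z := hzlim.cauchySeq
  have hcu : CauchySeq fun n => (ψ n : H) := by
    rw [Metric.cauchySeq_iff] at hcz ⊢
    intro δ hδ
    obtain ⟨N, hN⟩ := hcz (ε * δ) (by positivity)
    refine ⟨N, fun m hm n hn => ?_⟩
    have h1 := hN m hm n hn
    have h2 : ε * ‖(ψ m : H) - (ψ n : H)‖ ≤ ‖z m - z n‖ := by
      have h3 := hb (ψ m - ψ n)
      rw [T.map_sub, hψ m, hψ n] at h3
      simpa using h3
    rw [dist_eq_norm] at h1 ⊢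
    nlinarith [norm_nonneg ((ψ m : H) - (ψ n : H))]
  obtain ⟨x, hx⟩ := cauchySeq_tendsto_of_complete hcu
  have htend : Filter.Tendsto (fun n => ((ψ n : H), z n)) Filter.atTop (nhds (x, y)) :=
    hx.prodMk_nhds hzlim
  have hmem : (x, y) ∈ closure (T.graph : Set (H × H)) := by
    refine mem_closure_of_tendsto htend (Filter.Eventually.of_forall fun n => ?_)
    rw [← hψ n]
    exact T.mem_graph (ψ n)
  rw [← Submodule.topologicalClosure_coe, SetLike.mem_coe,
    hc.graph_closure_eq_closure_graph] at hmem
  rcases T.closure.mem_graph_iff.mp hmem with ⟨x', _, hx'2⟩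
  exact ⟨x', hx'2⟩

/-- Values of the closure lie in the closure of the range. -/
lemma st9_closure_mem_range {T : H →ₗ.[ℂ] H} (hc : T.IsClosable) (x : T.closure.domain) :
    T.closure x ∈ closure {z : H | ∃ ψ : T.domain, T ψ = z} := by
  have hg : ((x : H), T.closure x) ∈ closure (T.graph : Set (H × H)) := by
    have h := T.closure.mem_graph x
    rw [← hc.graph_closure_eq_closure_graph, ← SetLike.mem_coe,
      Submodule.topologicalClosure_coe] at h
    exact h
  have h1 : T.closure x ∈ Prod.snd '' closure (T.graph : Set (H × H)) := ⟨_, hg, rfl⟩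
  have h2 := image_closure_subset_closure_image (f := Prod.snd) continuous_snd h1
  refine closure_mono ?_ h2
  rintro w ⟨p, hp, rfl⟩
  rcases T.mem_graph_iff.mp hp with ⟨φ, _, hφ2⟩
  exact ⟨φ, hφ2⟩

end Helpers

/-- Let `A± = ±iS + V` with `S`, `V` symmetric on a common dense domain,
`V ≥ ε > 0` and `A±` sectorial, and let `A₊,F` be the Friedrichs extension of `A₊`
(a proper extension of the dual pair with `0 ∈ ρ(A₊,F)`, with bounded inverse `AFinv`). Then
`D(A₋*) = D(closure A₊) ∔ A₊,F⁻¹ ker(A₊*) ∔ ker(A₋*)`, a direct sum decomposition. -/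
theorem statement9 {H : Type*} [NormedAddCommGroup H] [InnerProductSpace ℂ H] [CompleteSpace H]
    (Dom : Submodule ℂ H) (hdense : Dense (Dom : Set H))
    (S V : Dom →ₗ[ℂ] H)
    (hS : ∀ f g : Dom, ⟪S f, (g : H)⟫ = ⟪(f : H), S g⟫)
    (hV : ∀ f g : Dom, ⟪V f, (g : H)⟫ = ⟪(f : H), V g⟫)
    (ε : ℝ) (hε : 0 < ε)
    (hVpos : ∀ ψ : Dom, ε * ‖(ψ : H)‖ ^ 2 ≤ (⟪(ψ : H), V ψ⟫).re)
    (Aplus Aminus : H →ₗ.[ℂ] H)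
    (hAp : Aplus = ⟨Dom, Complex.I • S + V⟩)
    (hAm : Aminus = ⟨Dom, (-Complex.I) • S + V⟩)
    (φp φm : ℝ) (hφp : φp ∈ Set.Ioo (0 : ℝ) (2 * π)) (hφm : φm ∈ Set.Ioo (0 : ℝ) (2 * π))
    (haccp : ∀ ψ : Aplus.domain, 0 ≤ (⟪(ψ : H), Aplus ψ⟫).re)
    (haccm : ∀ ψ : Aminus.domain, 0 ≤ (⟪(ψ : H), Aminus ψ⟫).re)
    (hsecp : ∀ ψ : Aplus.domain, 0 ≤ (Complex.exp (φp * Complex.I) * ⟪(ψ : H), Aplus ψ⟫).re)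
    (hsecm : ∀ ψ : Aminus.domain, 0 ≤ (Complex.exp (φm * Complex.I) * ⟪(ψ : H), Aminus ψ⟫).re)
    -- the Friedrichs extension A₊,F, a proper extension of the dual pair with 0 ∈ ρ(A₊,F)
    (AFp : H →ₗ.[ℂ] H)
    (hproper₁ : Aplus.closure ≤ AFp) (hproper₂ : AFp ≤ Aminus.adjoint)
    (AFinv : H →L[ℂ] H)
    (hinv1 : ∀ x : H, AFinv x ∈ AFp.domain)
    (hinv2 : ∀ x : H, AFp ⟨AFinv x, hinv1 x⟩ = x)
    (hinv3 : ∀ w : AFp.domain, AFinv (AFp w) = (w : H)) :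
    -- existence of the decomposition
    (∀ u : H, u ∈ Aminus.adjoint.domain →
      ∃ f k h : H, f ∈ Aplus.closure.domain ∧
        (∃ hk : k ∈ Aplus.adjoint.domain, Aplus.adjoint ⟨k, hk⟩ = 0) ∧
        (∃ hh : h ∈ Aminus.adjoint.domain, Aminus.adjoint ⟨h, hh⟩ = 0) ∧
        u = f + AFinv k + h) ∧
    -- uniqueness (directness of the sum)
    (∀ f f' k k' h h' : H,
      f ∈ Aplus.closure.domain → f' ∈ Aplus.closure.domain →
      (∃ hk : k ∈ Aplus.adjoint.domain, Aplus.adjoint ⟨k, hk⟩ = 0) →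
      (∃ hk' : k' ∈ Aplus.adjoint.domain, Aplus.adjoint ⟨k', hk'⟩ = 0) →
      (∃ hh : h ∈ Aminus.adjoint.domain, Aminus.adjoint ⟨h, hh⟩ = 0) →
      (∃ hh' : h' ∈ Aminus.adjoint.domain, Aminus.adjoint ⟨h', hh'⟩ = 0) →
      f + AFinv k + h = f' + AFinv k' + h' → f = f' ∧ k = k' ∧ h = h') := by
  subst hAp hAm
  -- notation
  set Ap : H →ₗ.[ℂ] H := ⟨Dom, Complex.I • S + V⟩ with hApdef
  set Am : H →ₗ.[ℂ] H := ⟨Dom, (-Complex.I) • S + V⟩ with hAmdef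
  have hdenseP : Dense (Ap.domain : Set H) := hdense
  have hdenseM : Dense (Am.domain : Set H) := hdense
  -- ⟪ψ, Sψ⟫ is real
  have hSreal : ∀ ψ : Dom, (⟪(ψ : H), S ψ⟫ : ℂ).im = 0 := by
    intro ψ
    have h1 : (starRingEnd ℂ) ⟪(ψ : H), S ψ⟫ = ⟪(ψ : H), S ψ⟫ := by
      rw [inner_conj_symm]
      exact hS ψ ψ
    exact Complex.conj_eq_iff_im.mp h1
  -- lower bound for Ap
  have hbound : ∀ ψ : Ap.domain, ε * ‖(ψ : H)‖ ≤ ‖Ap ψ‖ := by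
    intro ψ
    have happ : Ap ψ = Complex.I • S ψ + V ψ := rfl
    have hre : (⟪(ψ : H), Ap ψ⟫ : ℂ).re = (⟪(ψ : H), V ψ⟫ : ℂ).re := by
      rw [happ, inner_add_right, inner_smul_right, Complex.add_re, Complex.mul_re]
      simp [hSreal ψ]
    have h1 : ε * ‖(ψ : H)‖ ^ 2 ≤ (⟪(ψ : H), Ap ψ⟫ : ℂ).re := by
      rw [hre]; exact hVpos ψ
    have h2 : (⟪(ψ : H), Ap ψ⟫ : ℂ).re ≤ ‖(⟪(ψ : H), Ap ψ⟫ : ℂ)‖ := Complex.re_le_norm _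
    have h3 : ‖(⟪(ψ : H), Ap ψ⟫ : ℂ)‖ ≤ ‖(ψ : H)‖ * ‖Ap ψ‖ := norm_inner_le_norm _ _
    rcases eq_or_lt_of_le (norm_nonneg (ψ : H)) with h0 | h0
    · rw [← h0]
      simpa using norm_nonneg (Ap ψ)
    · have := h1.trans (h2.trans h3)
      nlinarith
  -- formal adjoint relations
  have hfa_m : Am.IsFormalAdjoint Ap := by
    intro x y
    have hx : Am x = (-Complex.I) • S x + V x := rfl
    have hy : Ap y = Complex.I • S y + V y := rfl
    rw [hx, hy, inner_add_left, inner_add_right, inner_smul_left, inner_smul_right,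
      hS x y, hV x y]
    simp
  have hfa_p : Ap.IsFormalAdjoint Am := by
    intro x y
    have hx : Ap x = Complex.I • S x + V x := rfl
    have hy : Am y = (-Complex.I) • S y + V y := rfl
    rw [hx, hy, inner_add_left, inner_add_right, inner_smul_left, inner_smul_right,
      hS x y, hV x y]
    simp
  have hle_pm : Ap ≤ Am.adjoint := hfa_m.le_adjoint hdenseM
  have hclosable : Ap.IsClosable :=
    (st9_adjoint_isClosed Am hdenseM).isClosable.leIsClosable hle_pm
  have hA0m : Ap.closure ≤ Am.adjoint := hproper₁.trans hproper₂
  -- closure of range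
  set R : Submodule ℂ H := LinearMap.range Ap.toFun with hRdef
  set Kc : Submodule ℂ H := R.topologicalClosure with hKcdef
  haveI : CompleteSpace Kc := (Submodule.isClosed_topologicalClosure R).completeSpace_coe
  have hRset : (R : Set H) = {z : H | ∃ ψ : Ap.domain, Ap ψ = z} := by
    ext z
    simp [hRdef, LinearMap.mem_range]
  have hKcset : (Kc : Set H) = closure {z : H | ∃ ψ : Ap.domain, Ap ψ = z} := by
    rw [hKcdef, Submodule.topologicalClosure_coe, hRset]
  -- orthogonal complement of Kc = kernel of Ap†
  have hker_of_orth : ∀ k : H, k ∈ Kcᗮ →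
      ∃ hk : k ∈ Ap.adjoint.domain, Ap.adjoint ⟨k, hk⟩ = 0 := by
    intro k hk
    have hco : ∀ ψ : Ap.domain, (⟪k, Ap ψ⟫ : ℂ) = 0 := by
      intro ψ
      have hmem : Ap ψ ∈ Kc := Submodule.le_topologicalClosure R ⟨ψ, rfl⟩
      have := (Submodule.mem_orthogonal Kc k).mp hk _ hmem
      rw [← inner_conj_symm, this, map_zero]
    have hdom : k ∈ Ap.adjoint.domain :=
      LinearPMap.mem_adjoint_domain_of_exists _ ⟨0, fun ψ => by
        rw [inner_zero_left, hco ψ]⟩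
    refine ⟨hdom, ?_⟩
    exact LinearPMap.adjoint_apply_eq hdenseP _ fun ψ => by
      rw [inner_zero_left, hco ψ]
  have horth_of_ker : ∀ (k : H) (hk : k ∈ Ap.adjoint.domain),
      Ap.adjoint ⟨k, hk⟩ = 0 → k ∈ Kcᗮ := by
    intro k hk hk0
    rw [Submodule.mem_orthogonal]
    intro u hu
    have hbase : ∀ z ∈ (R : Set H), (⟪z, k⟫ : ℂ) = 0 := by
      rintro z ⟨ψ, rfl⟩
      have h1 : (⟪k, Ap ψ⟫ : ℂ) = 0 := by
        have := LinearPMap.adjoint_isFormalAdjoint hdenseP (⟨k, hk⟩ : Ap.adjoint.domain) ψ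
        rw [hk0] at this
        rw [← this, inner_zero_left]
      show (⟪Ap ψ, k⟫ : ℂ) = 0
      rw [← inner_conj_symm, h1, map_zero]
    have hclosedset : IsClosed {z : H | (⟪z, k⟫ : ℂ) = 0} :=
      isClosed_eq (Continuous.inner continuous_id continuous_const) continuous_const
    have hsubset : (Kc : Set H) ⊆ {z : H | (⟪z, k⟫ : ℂ) = 0} := by
      rw [hKcdef, Submodule.topologicalClosure_coe]
      exact closure_minimal hbase hclosedset
    exact hsubset hu
  constructor
  · -- existence
    intro u hu
    set w : H := Am.adjoint ⟨u, hu⟩ with hwdef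
    obtain ⟨g, hgKc, k, hkOrth, hw⟩ := Kc.exists_add_mem_mem_orthogonal w
    have hgcl : g ∈ closure {z : H | ∃ ψ : Ap.domain, Ap ψ = z} := by
      rw [← hKcset]; exact hgKc
    obtain ⟨x₀, hx₀⟩ := st9_closure_surj hclosable hε hbound hgcl
    obtain ⟨hkdom, hkval⟩ := hker_of_orth k hkOrth
    set f : H := (x₀ : H) with hfdef
    have hfA0 : f ∈ Ap.closure.domain := x₀.2
    have hfAF : f ∈ AFp.domain := hproper₁.1 hfA0
    have hgAF : AFp ⟨f, hfAF⟩ = g := by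
      rw [← hx₀]
      exact (hproper₁.2 rfl).symm
    have hv1 : AFinv g = f := by
      rw [← hgAF]
      exact hinv3 ⟨f, hfAF⟩
    have hvsum : AFinv w = f + AFinv k := by
      rw [hw, map_add, hv1]
    -- h := u - AFinv w
    have hvdom : AFinv w ∈ Am.adjoint.domain := hproper₂.1 (hinv1 w)
    have hvval : Am.adjoint ⟨AFinv w, hvdom⟩ = w := by
      have h1 : AFp ⟨AFinv w, hinv1 w⟩ = Am.adjoint ⟨AFinv w, hvdom⟩ := hproper₂.2 rfl
      rw [← h1, hinv2]
    have hhdom : u - AFinv w ∈ Am.adjoint.domain := sub_mem hu hvdom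
    have hhval : Am.adjoint ⟨u - AFinv w, hhdom⟩ = 0 := by
      have heq : (⟨u - AFinv w, hhdom⟩ : Am.adjoint.domain)
          = ⟨u, hu⟩ - ⟨AFinv w, hvdom⟩ := rfl
      rw [heq, Am.adjoint.map_sub, hvval, ← hwdef, sub_self]
    refine ⟨f, k, u - AFinv w, hfA0, ⟨hkdom, hkval⟩, ⟨hhdom, hhval⟩, ?_⟩
    rw [← hvsum]
    abel
  · -- uniqueness
    intro f f' k k' h h' hf hf' ⟨hk, hk0⟩ ⟨hk', hk'0⟩ ⟨hh, hh0⟩ ⟨hh', hh'0⟩ heq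
    set F : H := f - f' with hFdef
    set K : H := k - k' with hKdef
    set Hh : H := h - h' with hHhdef
    have hF : F ∈ Ap.closure.domain := sub_mem hf hf'
    have hK : K ∈ Ap.adjoint.domain := sub_mem hk hk'
    have hKval : Ap.adjoint ⟨K, hK⟩ = 0 := by
      have heqm : (⟨K, hK⟩ : Ap.adjoint.domain) = ⟨k, hk⟩ - ⟨k', hk'⟩ := rfl
      rw [heqm, Ap.adjoint.map_sub, hk0, hk'0, sub_self]
    have hHd : Hh ∈ Am.adjoint.domain := sub_mem hh hh'
    have hHval : Am.adjoint ⟨Hh, hHd⟩ = 0 := by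
      have heqm : (⟨Hh, hHd⟩ : Am.adjoint.domain) = ⟨h, hh⟩ - ⟨h', hh'⟩ := rfl
      rw [heqm, Am.adjoint.map_sub, hh0, hh'0, sub_self]
    have heq2 : F + AFinv K + Hh = 0 := by
      rw [hFdef, hKdef, hHhdef, map_sub]
      rw [sub_add_sub_comm, sub_add_sub_comm, heq, sub_self]
    -- apply Am† to the relation
    have memF : F ∈ Am.adjoint.domain := hA0m.1 hF
    set gF : H := Ap.closure ⟨F, hF⟩ with hgFdef
    have hvalF : Am.adjoint ⟨F, memF⟩ = gF := (hA0m.2 rfl).symm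
    have memK : AFinv K ∈ Am.adjoint.domain := hproper₂.1 (hinv1 K)
    have hvalK : Am.adjoint ⟨AFinv K, memK⟩ = K := by
      have h1 : AFp ⟨AFinv K, hinv1 K⟩ = Am.adjoint ⟨AFinv K, memK⟩ := hproper₂.2 rfl
      rw [← h1, hinv2]
    have memsum : F + AFinv K + Hh ∈ Am.adjoint.domain := add_mem (add_mem memF memK) hHd
    have hsplit : (⟨F + AFinv K + Hh, memsum⟩ : Am.adjoint.domain)
        = (⟨F, memF⟩ + ⟨AFinv K, memK⟩) + ⟨Hh, hHd⟩ := rfl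
    have hzero : (⟨F + AFinv K + Hh, memsum⟩ : Am.adjoint.domain) = 0 :=
      Subtype.ext heq2
    have hsum0 : gF + K = 0 := by
      have h1 : Am.adjoint ⟨F + AFinv K + Hh, memsum⟩ = gF + K := by
        rw [hsplit, Am.adjoint.map_add, Am.adjoint.map_add, hvalF, hvalK, hHval, add_zero]
      rw [hzero, Am.adjoint.map_zero] at h1
      rw [← h1]
    -- gF ∈ Kc, K ∈ Kcᗮ, gF = -K
    have hgFmem : gF ∈ Kc := by
      rw [← SetLike.mem_coe, hKcset]
      exact st9_closure_mem_range hclosable ⟨F, hF⟩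
    have hKorth : K ∈ Kcᗮ := horth_of_ker K hK hKval
    have hgForth : gF ∈ Kcᗮ := by
      have : gF = -K := eq_neg_of_add_eq_zero_left hsum0
      rw [this]
      exact neg_mem hKorth
    have hgF0 : gF = 0 := by
      have := (Submodule.mem_orthogonal Kc gF).mp hgForth gF hgFmem
      exact inner_self_eq_zero.mp this
    have hK0 : K = 0 := by
      have := hsum0
      rw [hgF0, zero_add] at this
      exact this
    have hF0 : F = 0 := by
      have hb := st9_closure_bound hclosable hbound ⟨F, hF⟩
      rw [← hgFdef, hgF0, norm_zero] at hb
      have : ‖F‖ = 0 := le_antisymm (by nlinarith) (norm_nonneg F)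
      exact norm_eq_zero.mp this
    have hH0 : Hh = 0 := by
      have := heq2
      rw [hF0, hK0, map_zero, zero_add, zero_add] at this
      exact this
    exact ⟨sub_eq_zero.mp hF0, sub_eq_zero.mp hK0, sub_eq_zero.mp hH0⟩
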